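/- Let θ and λ be ordinals, let <_T be an iteration tree order on θ and <_X an iteration tree order on λ, and let (γ_β, δ_β)_{β<θ} be an almost-T1-system from (θ,<_T) to (λ,<_X), i.e. a system satisfying all requirements of a T1-system except that the map β ↦ γ_β need not be continuous at limit ordinals (it is still required that γ_β be a limit ordinal for limit β). Define γ'_β = γ_β for β = 0 and for β a successor ordinal, and γ'_β = sup_{β'<β} γ_{β'} for β a limit ordinal. Then: (1) (γ'_β, δ_β)_{β<θ} is a T1-system from (θ,<_T) to (λ,<_X); (2) it is the unique T1-system whose δ-sequence is (δ_β)_{β<θ}; (3) for every limit ordinal β < θ one has γ'_β ≤_X γ_β and γ'_β = sup_{β'<β} γ_{β'} = sup_{β'<β} (δ_{β'} + 1). -/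

import Mathlib

universe u

/-- `r` is an iteration tree order on the ordinals below `l`:  a strict partial order such
that (i) `r β α → β < α`; (ii) `r 0 α` for all `0 < α < l`; (iii) each branch `[0, α)_r` is
linearly ordered by `r`; (iv) for each successor `α + 1 < l` the branch `[0, α + 1)_r` has an
`r`-greatest element; (v) for each limit `α < l` the branch `[0, α)_r` is cofinal in `α` and
closed in `α`. -/
structure IsTreeOrder (l : Ordinal.{u}) (r : Ordinal.{u} → Ordinal.{u} → Prop) : Prop where
  lt_of_rel : ∀ {α β}, r α β → α < β
  lt_len : ∀ {α β}, r α β → β < l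
  zero_rel : ∀ {α}, 0 < α → α < l → r 0 α
  rel_trans : ∀ {α β γ}, r α β → r β γ → r α γ
  branch_linear : ∀ {α β γ}, r α γ → r β γ → r α β ∨ α = β ∨ r β α
  pred_exists : ∀ {α}, α + 1 < l → ∃ p, r p (α + 1) ∧ ∀ γ, r γ (α + 1) → γ = p ∨ r γ p
  limit_cofinal : ∀ {α}, α < l → Order.IsSuccLimit α → ∀ γ < α, ∃ β, γ ≤ β ∧ r β α
  limit_closed : ∀ {α}, α < l → Order.IsSuccLimit α → ∀ {μ}, Order.IsSuccLimit μ → μ < α →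
    (∀ γ < μ, ∃ β, γ ≤ β ∧ β < μ ∧ r β α) → r μ α

/-- The reflexivization of the strict relation `r`: `a ≤_r b` iff `a = b ∨ r a b`. -/
def RelLE (r : Ordinal.{u} → Ordinal.{u} → Prop) (a b : Ordinal.{u}) : Prop :=
  a = b ∨ r a b

/-- `p` is the `r`-greatest element of the branch `[0, α)_r`, i.e. `p = pred_r α`. -/
def IsTreePred (r : Ordinal.{u} → Ordinal.{u} → Prop) (p α : Ordinal.{u}) : Prop :=
  r p α ∧ ∀ γ, r γ α → RelLE r γ p

/-- `ξ ∈ I_β = [γ β, δ β]_{rX} = {ξ : γ β ≤_{rX} ξ ∧ ξ ≤_{rX} δ β}`. -/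
def MemInterval (rX : Ordinal.{u} → Ordinal.{u} → Prop) (γ δ : Ordinal.{u} → Ordinal.{u})
    (β ξ : Ordinal.{u}) : Prop :=
  RelLE rX (γ β) ξ ∧ RelLE rX ξ (δ β)

/-- A T1-system from `(θ, rT)` to `(l, rX)`: ordinals `γ β ≤ δ β < l` with `γ β ≤_{rX} δ β`
for `β < θ`, such that `γ 0 = 0`, `β ↦ γ β` is strictly increasing and continuous,
`β₀ <_T β₁ ↔ γ β₀ <_X γ β₁`, `γ (β + 1) = δ β + 1`, and `pred_X (γ (β + 1)) ∈ I_{pred_T (β+1)}`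
whenever `β + 1 < θ`.  (These are exactly the tree-structure-preservation requirements,
condition T1, of a tree embedding.) -/
structure IsT1System (θ l : Ordinal.{u}) (rT rX : Ordinal.{u} → Ordinal.{u} → Prop)
    (γ δ : Ordinal.{u} → Ordinal.{u}) : Prop where
  gamma_le_delta : ∀ β < θ, γ β ≤ δ β
  delta_lt : ∀ β < θ, δ β < l
  gamma_relLE_delta : ∀ β < θ, RelLE rX (γ β) (δ β)
  gamma_zero : 0 < θ → γ 0 = 0
  gamma_strictMono : ∀ β' β, β' < β → β < θ → γ β' < γ β
  gamma_continuous : ∀ β < θ, Order.IsSuccLimit β → γ β = sSup (γ '' Set.Iio β)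
  rel_iff : ∀ β₀ < θ, ∀ β₁ < θ, (rT β₀ β₁ ↔ rX (γ β₀) (γ β₁))
  gamma_succ : ∀ β, β + 1 < θ → γ (β + 1) = δ β + 1
  pred_mem : ∀ β, β + 1 < θ → ∀ pT pX,
    IsTreePred rT pT (β + 1) → IsTreePred rX pX (γ (β + 1)) → MemInterval rX γ δ pT pX

/-- An almost-T1-system: as a T1-system, except that `β ↦ γ β` need not be continuous at
limit ordinals; it is still required that `γ β` be a limit ordinal for limit `β`. -/
structure IsAlmostT1System (θ l : Ordinal.{u}) (rT rX : Ordinal.{u} → Ordinal.{u} → Prop)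
    (γ δ : Ordinal.{u} → Ordinal.{u}) : Prop where
  gamma_le_delta : ∀ β < θ, γ β ≤ δ β
  delta_lt : ∀ β < θ, δ β < l
  gamma_relLE_delta : ∀ β < θ, RelLE rX (γ β) (δ β)
  gamma_zero : 0 < θ → γ 0 = 0
  gamma_strictMono : ∀ β' β, β' < β → β < θ → γ β' < γ β
  gamma_isLimit : ∀ β < θ, Order.IsSuccLimit β → Order.IsSuccLimit (γ β)
  rel_iff : ∀ β₀ < θ, ∀ β₁ < θ, (rT β₀ β₁ ↔ rX (γ β₀) (γ β₁))
  gamma_succ : ∀ β, β + 1 < θ → γ (β + 1) = δ β + 1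
  pred_mem : ∀ β, β + 1 < θ → ∀ pT pX,
    IsTreePred rT pT (β + 1) → IsTreePred rX pX (γ (β + 1)) → MemInterval rX γ δ pT pX

theorem treeOrder_closed_branch {l : Ordinal.{u}} {r : Ordinal.{u} → Ordinal.{u} → Prop}
    (h : IsTreeOrder l r) (α : Ordinal.{u}) :
    ∀ μ, α < l → Order.IsSuccLimit μ → μ < α →
      (∀ ξ < μ, ∃ ζ, ξ ≤ ζ ∧ ζ < μ ∧ r ζ α) → r μ α := by
  induction α using Ordinal.induction with
  | _ α IH =>
    intro μ hαl hμ hμα hcof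
    rcases Ordinal.zero_or_succ_or_isSuccLimit α with h0 | ⟨a, ha⟩ | hlim
    · exact absurd (h0 ▸ hμα) (not_lt_zero (a := μ))
    · rw [← Ordinal.add_one_eq_succ] at ha
      subst ha
      obtain ⟨p, hp, hmax⟩ := h.pred_exists hαl
      have hple : μ ≤ p := by
        by_contra hc
        push_neg at hc
        obtain ⟨ζ, h1, h2, h3⟩ := hcof (p + 1) (by
          rw [Ordinal.add_one_eq_succ]; exact hμ.succ_lt hc)
        rcases hmax ζ h3 with rfl | h4
        · exact absurd h1 (by simp)
        · exact absurd (h.lt_of_rel h4) (not_lt.2 (le_trans (le_of_lt (lt_add_one p)) h1))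
      rcases eq_or_lt_of_le hple with rfl | hlt
      · exact hp
      · refine h.rel_trans (IH p (h.lt_of_rel hp) μ (lt_trans (h.lt_of_rel hp) hαl) hμ hlt ?_) hp
        intro ξ hξ
        obtain ⟨ζ, h1, h2, h3⟩ := hcof ξ hξ
        rcases hmax ζ h3 with rfl | h4
        · exact absurd h2 (not_lt.2 hple)
        · exact ⟨ζ, h1, h2, h4⟩
    · exact h.limit_closed hαl hlim hμ hμα hcof

theorem relLE_trans {l : Ordinal.{u}} {r : Ordinal.{u} → Ordinal.{u} → Prop}
    (h : IsTreeOrder l r) {a b c : Ordinal.{u}}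
    (h1 : RelLE r a b) (h2 : RelLE r b c) : RelLE r a c := by
  rcases h1 with rfl | h1
  · exact h2
  · rcases h2 with rfl | h2
    · exact Or.inr h1
    · exact Or.inr (h.rel_trans h1 h2)

/-- Given an almost-T1-system `(γ, δ)` from `(θ, rT)` to `(l, rX)`, let `γ'` agree with `γ`
at `0` and at successor ordinals, and be given by `γ' β = sup_{β' < β} γ β'` at limit
ordinals.  Then (1) `(γ', δ)` is a T1-system; (2) it is the unique T1-system with
δ-sequence `δ`; (3) for every limit `β < θ`, `γ' β ≤_X γ β` and
`γ' β = sup_{β' < β} γ β' = sup_{β' < β} (δ β' + 1)`. -/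
theorem almostT1System_to_T1System
    {θ l : Ordinal.{u}} {rT rX : Ordinal.{u} → Ordinal.{u} → Prop}
    {γ δ γ' : Ordinal.{u} → Ordinal.{u}}
    (hT : IsTreeOrder θ rT) (hX : IsTreeOrder l rX)
    (hsys : IsAlmostT1System θ l rT rX γ δ)
    (hγ'₀ : γ' 0 = γ 0)
    (hγ'succ : ∀ β, γ' (β + 1) = γ (β + 1))
    (hγ'lim : ∀ β, Order.IsSuccLimit β → γ' β = sSup (γ '' Set.Iio β)) :
    IsT1System θ l rT rX γ' δ ∧
      (∀ γ'', IsT1System θ l rT rX γ'' δ → ∀ β < θ, γ'' β = γ' β) ∧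
      ∀ β < θ, Order.IsSuccLimit β →
        RelLE rX (γ' β) (γ β) ∧
          γ' β = sSup (γ '' Set.Iio β) ∧
            γ' β = sSup ((fun β' => δ β' + 1) '' Set.Iio β) := by
  -- γ' agrees with γ at non-limits
  have hγ'eq : ∀ β, ¬ Order.IsSuccLimit β → γ' β = γ β := by
    intro β hβ
    rcases Ordinal.zero_or_succ_or_isSuccLimit β with rfl | ⟨a, ha⟩ | hl
    · exact hγ'₀
    · rw [← Ordinal.add_one_eq_succ] at ha; subst ha; exact hγ'succ a
    · exact absurd hl hβ
  have hbdd : ∀ β < θ, BddAbove (γ '' Set.Iio β) := by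
    intro β hβ
    exact ⟨γ β, fun x ⟨b, hb, he⟩ => he ▸ le_of_lt (hsys.gamma_strictMono b β hb hβ)⟩
  have hne : ∀ β : Ordinal.{u}, Order.IsSuccLimit β → (γ '' Set.Iio β).Nonempty := by
    intro β hβ
    exact ⟨γ 0, Set.mem_image_of_mem _ hβ.pos⟩
  -- γ b < γ' β for b < β < θ
  have hlt : ∀ b β, b < β → β < θ → γ b < γ' β := by
    intro b β hb hβ
    by_cases hl : Order.IsSuccLimit β
    · rw [hγ'lim β hl]
      have hb1 : b + 1 < β := by rw [Ordinal.add_one_eq_succ]; exact hl.succ_lt hb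
      calc γ b < γ (b + 1) := hsys.gamma_strictMono b (b + 1) (lt_add_one b) (hb1.trans hβ)
        _ ≤ sSup (γ '' Set.Iio β) := le_csSup (hbdd β hβ) (Set.mem_image_of_mem _ hb1)
    · rw [hγ'eq β hl]; exact hsys.gamma_strictMono b β hb hβ
  -- γ' β ≤ γ β at limits
  have hμle : ∀ β < θ, Order.IsSuccLimit β → γ' β ≤ γ β := by
    intro β hβ hl
    rw [hγ'lim β hl]
    exact csSup_le (hne β hl) (fun x ⟨b, hb, he⟩ => he ▸ le_of_lt (hsys.gamma_strictMono b β hb hβ))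
  have hγ'le : ∀ β < θ, γ' β ≤ γ β := by
    intro β hβ
    by_cases hl : Order.IsSuccLimit β
    · exact hμle β hβ hl
    · rw [hγ'eq β hl]
  -- γ' β is a limit ordinal at limits
  have hμlim : ∀ β < θ, Order.IsSuccLimit β → Order.IsSuccLimit (γ' β) := by
    intro β hβ hl
    rw [Ordinal.isSuccLimit_iff, Order.isSuccPrelimit_iff_succ_lt]
    constructor
    · have h0 : (0 : Ordinal) < β := hl.pos
      have := hlt 0 β h0 hβ
      exact fun h => by simp [h] at this
    · intro a ha
      rw [hγ'lim β hl] at ha ⊢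
      obtain ⟨x, ⟨b, hb, rfl⟩, hax⟩ := exists_lt_of_lt_csSup (hne β hl) ha
      have hb1 : b + 1 < β := by rw [Ordinal.add_one_eq_succ]; exact hl.succ_lt hb
      calc Order.succ a ≤ γ b := Order.succ_le_iff.mpr hax
        _ < γ (b + 1) := hsys.gamma_strictMono b (b + 1) (lt_add_one b) (hb1.trans hβ)
        _ ≤ _ := le_csSup (hbdd β hβ) (Set.mem_image_of_mem _ hb1)
  -- key: γ' β ≤_X γ β at limits
  have keyRel : ∀ β < θ, Order.IsSuccLimit β → RelLE rX (γ' β) (γ β) := by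
    intro β hβ hl
    rcases eq_or_lt_of_le (hμle β hβ hl) with he | hltμ
    · exact Or.inl he
    · refine Or.inr (treeOrder_closed_branch hX (γ β) (γ' β)
        ((hsys.gamma_le_delta β hβ).trans_lt (hsys.delta_lt β hβ)) (hμlim β hβ hl) hltμ ?_)
      intro ξ hξ
      rw [hγ'lim β hl] at hξ
      obtain ⟨x, ⟨b, hb, rfl⟩, hxb⟩ := exists_lt_of_lt_csSup (hne β hl) hξ
      obtain ⟨b', hbb', hb'⟩ := hT.limit_cofinal hβ hl b hb
      have hb'β : b' < β := hT.lt_of_rel hb'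
      refine ⟨γ b', le_trans (le_of_lt hxb) ?_, ?_, ?_⟩
      · rcases eq_or_lt_of_le hbb' with rfl | hlt'
        · exact le_rfl
        · exact le_of_lt (hsys.gamma_strictMono b b' hlt' (hb'β.trans hβ))
      · exact hlt b' β hb'β hβ
      · exact (hsys.rel_iff b' (hb'β.trans hβ) β hβ).mp hb'
  -- branch fact: b <_T β (β limit) → γ b <_X γ' β
  have branchRel : ∀ β < θ, Order.IsSuccLimit β → ∀ b, rT b β → rX (γ b) (γ' β) := by
    intro β hβ hl b hb
    have hbβ : b < β := hT.lt_of_rel hb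
    have h1 : γ b < γ' β := hlt b β hbβ hβ
    have h2 : rX (γ b) (γ β) := (hsys.rel_iff b (hbβ.trans hβ) β hβ).mp hb
    rcases keyRel β hβ hl with he | h3
    · exact he ▸ h2
    · rcases hX.branch_linear h2 h3 with h4 | h4 | h4
      · exact h4
      · exact absurd h4 (ne_of_lt h1)
      · exact absurd (hX.lt_of_rel h4) (not_lt.2 (le_of_lt h1))
  have hγ'mono : ∀ b β, b < β → β < θ → γ' b < γ' β := by
    intro b β hb hβ
    exact lt_of_le_of_lt (hγ'le b (hb.trans hβ)) (hlt b β hb hβ)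
  -- rel_iff for γ'
  have rel_iff' : ∀ β₀, β₀ < θ → ∀ β₁, β₁ < θ → (rT β₀ β₁ ↔ rX (γ' β₀) (γ' β₁)) := by
    intro β₀ hθ₀ β₁ hθ₁
    constructor
    · intro h
      have hg : rX (γ β₀) (γ β₁) := (hsys.rel_iff β₀ hθ₀ β₁ hθ₁).mp h
      have h1 : rX (γ β₀) (γ' β₁) := by
        by_cases hl : Order.IsSuccLimit β₁
        · exact branchRel β₁ hθ₁ hl β₀ h
        · rw [hγ'eq β₁ hl]; exact hg
      by_cases hl : Order.IsSuccLimit β₀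
      · rcases keyRel β₀ hθ₀ hl with he | h2
        · exact he ▸ h1
        · exact hX.rel_trans h2 h1
      · rw [hγ'eq β₀ hl]; exact h1
    · intro h
      have hab : β₀ < β₁ := by
        by_contra hc
        push_neg at hc
        rcases eq_or_lt_of_le hc with rfl | hc'
        · exact absurd (hX.lt_of_rel h) (lt_irrefl _)
        · exact absurd (hX.lt_of_rel h) (not_lt.2 (le_of_lt (hγ'mono β₁ β₀ hc' hθ₀)))
      have h2 : rX (γ' β₀) (γ β₁) := by
        by_cases hl : Order.IsSuccLimit β₁
        · rcases keyRel β₁ hθ₁ hl with he | h3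
          · exact he ▸ h
          · exact hX.rel_trans h h3
        · rw [← hγ'eq β₁ hl]; exact h
      by_cases hl : Order.IsSuccLimit β₀
      · refine treeOrder_closed_branch hT β₁ β₀ hθ₁ hl hab ?_
        intro ξ hξ
        obtain ⟨b, hξb, hb⟩ := hT.limit_cofinal hθ₀ hl ξ hξ
        have hbβ : b < β₀ := hT.lt_of_rel hb
        have h3 : rX (γ b) (γ β₁) := hX.rel_trans (branchRel β₀ hθ₀ hl b hb) h2
        exact ⟨b, hξb, hbβ, (hsys.rel_iff b (hbβ.trans hθ₀) β₁ hθ₁).mpr h3⟩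
      · rw [hγ'eq β₀ hl] at h2
        exact (hsys.rel_iff β₀ hθ₀ β₁ hθ₁).mpr h2
  -- continuity of γ'
  have hcont : ∀ β < θ, Order.IsSuccLimit β → γ' β = sSup (γ' '' Set.Iio β) := by
    intro β hβ hl
    rw [hγ'lim β hl]
    have hbdd' : BddAbove (γ' '' Set.Iio β) := by
      refine ⟨γ β, ?_⟩
      rintro x ⟨c, hc, rfl⟩
      exact le_of_lt (lt_of_le_of_lt (hγ'le c (hc.trans hβ)) (hsys.gamma_strictMono c β hc hβ))
    apply le_antisymm
    · refine csSup_le (hne β hl) ?_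
      rintro x ⟨b, hb, rfl⟩
      have hb1 : b + 1 < β := by rw [Ordinal.add_one_eq_succ]; exact hl.succ_lt hb
      calc γ b ≤ γ' (b + 1) := by
            rw [hγ'succ b]
            exact le_of_lt (hsys.gamma_strictMono b (b + 1) (lt_add_one b) (hb1.trans hβ))
        _ ≤ _ := le_csSup hbdd' (Set.mem_image_of_mem _ hb1)
    · refine csSup_le ⟨γ' 0, Set.mem_image_of_mem _ hl.pos⟩ ?_
      rintro x ⟨b, hb, rfl⟩
      exact le_trans (hγ'le b (hb.trans hβ)) (le_csSup (hbdd β hβ) (Set.mem_image_of_mem _ hb))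
  have main : IsT1System θ l rT rX γ' δ := by
    refine ⟨?_, hsys.delta_lt, ?_, ?_, hγ'mono, hcont, rel_iff', ?_, ?_⟩
    · intro β hβ
      exact le_trans (hγ'le β hβ) (hsys.gamma_le_delta β hβ)
    · intro β hβ
      by_cases hl : Order.IsSuccLimit β
      · exact relLE_trans hX (keyRel β hβ hl) (hsys.gamma_relLE_delta β hβ)
      · rw [hγ'eq β hl]; exact hsys.gamma_relLE_delta β hβ
    · intro h0
      rw [hγ'₀]; exact hsys.gamma_zero h0
    · intro β hβ
      rw [hγ'succ β]; exact hsys.gamma_succ β hβ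
    · intro β hβ pT pX hpT hpX
      rw [hγ'succ β] at hpX
      obtain ⟨h1, h2⟩ := hsys.pred_mem β hβ pT pX hpT hpX
      have hpTθ : pT < θ := (hT.lt_of_rel hpT.1).trans hβ
      have h3 : RelLE rX (γ' pT) (γ pT) := by
        by_cases hl : Order.IsSuccLimit pT
        · exact keyRel pT hpTθ hl
        · exact Or.inl (hγ'eq pT hl)
      exact ⟨relLE_trans hX h3 h1, h2⟩
  refine ⟨main, ?_, ?_⟩
  · intro γ'' hsys'' β
    induction β using Ordinal.induction with
    | _ β IH =>
      intro hβ
      rcases Ordinal.zero_or_succ_or_isSuccLimit β with rfl | ⟨a, ha⟩ | hl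
      · rw [hsys''.gamma_zero hβ, hγ'₀, hsys.gamma_zero hβ]
      · rw [← Ordinal.add_one_eq_succ] at ha; subst ha
        rw [hsys''.gamma_succ a hβ, hγ'succ a, hsys.gamma_succ a hβ]
      · rw [hsys''.gamma_continuous β hβ hl, hcont β hβ hl]
        congr 1
        exact Set.image_congr (fun b hb => IH b hb (hb.trans hβ))
  · intro β hβ hl
    refine ⟨keyRel β hβ hl, hγ'lim β hl, ?_⟩
    rw [hγ'lim β hl]
    apply le_antisymm
    · refine csSup_le (hne β hl) ?_
      rintro x ⟨b, hb, rfl⟩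
      refine le_trans (le_of_lt (lt_of_le_of_lt (hsys.gamma_le_delta b (hb.trans hβ))
        (lt_add_one (δ b)))) (le_csSup ?_ (Set.mem_image_of_mem _ hb))
      refine ⟨γ β, ?_⟩
      rintro x ⟨c, hc, rfl⟩
      have hc1 : c + 1 < β := by rw [Ordinal.add_one_eq_succ]; exact hl.succ_lt hc
      show δ c + 1 ≤ γ β
      rw [← hsys.gamma_succ c (hc1.trans hβ)]
      exact le_of_lt (hsys.gamma_strictMono (c + 1) β hc1 hβ)
    · refine csSup_le ⟨δ 0 + 1, Set.mem_image_of_mem _ hl.pos⟩ ?_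
      rintro x ⟨b, hb, rfl⟩
      have hb1 : b + 1 < β := by rw [Ordinal.add_one_eq_succ]; exact hl.succ_lt hb
      show δ b + 1 ≤ sSup (γ '' Set.Iio β)
      rw [← hsys.gamma_succ b (hb1.trans hβ)]
      exact le_csSup (hbdd β hβ) (Set.mem_image_of_mem _ hb1)
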